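/- For all α ∈ [0,2]: T(α) ≤ (90+19α)·(α+2)/(α+9), where T(α) = (90+19α)·Γ(α/2+2)·Γ(α+9/2) / (Γ(α/2+11/2)·Γ(α+2)). -/

import Mathlib

open MeasureTheory Set Real

lemma myBetaInt (x y : ℝ) (hx : -1 < x) (hy : -1 < y) :
    IntegrableOn (fun t : ℝ => t ^ x * (1 - t) ^ y) (Ioc (0:ℝ) 1) := by
  have hC := (Complex.betaIntegral_convergent (u := ((x+1:ℝ):ℂ)) (v := ((y+1:ℝ):ℂ))
    (by simp; linarith) (by simp; linarith)).1
  have hre : IntegrableOn (fun t : ℝ =>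
      (((t:ℂ) ^ (((x+1:ℝ):ℂ) - 1) * ((1:ℂ) - (t:ℂ)) ^ (((y+1:ℝ):ℂ) - 1)).re))
      (Ioc (0:ℝ) 1) := hC.re
  refine hre.congr_fun (fun t ht => ?_) measurableSet_Ioc
  have h1 : (((x+1:ℝ):ℂ) - 1) = ((x:ℝ):ℂ) := by push_cast; ring
  have h2 : (((y+1:ℝ):ℂ) - 1) = ((y:ℝ):ℂ) := by push_cast; ring
  have ht0 : (0:ℝ) ≤ t := le_of_lt ht.1
  have ht1 : (0:ℝ) ≤ 1 - t := by linarith [ht.2]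
  beta_reduce
  rw [h1, h2, ← Complex.ofReal_cpow ht0, ← Complex.ofReal_one, ← Complex.ofReal_sub,
    ← Complex.ofReal_cpow ht1, ← Complex.ofReal_mul, Complex.ofReal_re]

lemma myBeta (x y : ℝ) (hx : -1 < x) (hy : -1 < y) :
    ∫ t in Ioc (0:ℝ) 1, t ^ x * (1 - t) ^ y
      = Real.Gamma (x+1) * Real.Gamma (y+1) / Real.Gamma (x+y+2) := by
  have h := Complex.Gamma_mul_Gamma_eq_betaIntegral (s := ((x+1:ℝ):ℂ)) (t := ((y+1:ℝ):ℂ))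
    (by simp; linarith) (by simp; linarith)
  have hbeta : Complex.betaIntegral ((x+1:ℝ):ℂ) ((y+1:ℝ):ℂ)
      = ((∫ t in Ioc (0:ℝ) 1, t ^ x * (1 - t) ^ y : ℝ) : ℂ) := by
    have hcast : ((∫ t in Ioc (0:ℝ) 1, t ^ x * (1 - t) ^ y : ℝ) : ℂ)
        = ∫ t in Ioc (0:ℝ) 1, ((t ^ x * (1 - t) ^ y : ℝ) : ℂ) := integral_ofReal.symm
    rw [Complex.betaIntegral, intervalIntegral.integral_of_le zero_le_one, hcast]
    refine setIntegral_congr_fun measurableSet_Ioc (fun t ht => ?_)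
    have h1 : (((x+1:ℝ):ℂ) - 1) = ((x:ℝ):ℂ) := by push_cast; ring
    have h2 : (((y+1:ℝ):ℂ) - 1) = ((y:ℝ):ℂ) := by push_cast; ring
    have ht0 : (0:ℝ) ≤ t := le_of_lt ht.1
    have ht1 : (0:ℝ) ≤ 1 - t := by linarith [ht.2]
    rw [h1, h2, Complex.ofReal_mul, Complex.ofReal_cpow ht0, Complex.ofReal_cpow ht1]
    push_cast
    ring
  rw [hbeta] at h
  have hsum : ((x+1:ℝ):ℂ) + ((y+1:ℝ):ℂ) = ((x+y+2:ℝ):ℂ) := by push_cast; ring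
  rw [hsum, Complex.Gamma_ofReal, Complex.Gamma_ofReal, Complex.Gamma_ofReal] at h
  have h' : Real.Gamma (x+1) * Real.Gamma (y+1)
      = Real.Gamma (x+y+2) * ∫ t in Ioc (0:ℝ) 1, t ^ x * (1 - t) ^ y := by
    exact_mod_cast h
  have hpos : 0 < Real.Gamma (x+y+2) := Real.Gamma_pos_of_pos (by linarith)
  field_simp [ne_of_gt hpos]
  linarith [h']


lemma g32 : Real.Gamma (3/2) = (1/2) * Real.Gamma (1/2) := by
  rw [show (3/2:ℝ) = 1/2 + 1 by norm_num, Real.Gamma_add_one (by norm_num)]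

lemma g52 : Real.Gamma (5/2) = (3/4) * Real.Gamma (1/2) := by
  rw [show (5/2:ℝ) = 3/2 + 1 by norm_num, Real.Gamma_add_one (by norm_num), g32]; ring

lemma g72 : Real.Gamma (7/2) = (15/8) * Real.Gamma (1/2) := by
  rw [show (7/2:ℝ) = 5/2 + 1 by norm_num, Real.Gamma_add_one (by norm_num), g52]; ring

lemma g92 : Real.Gamma (9/2) = (105/16) * Real.Gamma (1/2) := by
  rw [show (9/2:ℝ) = 7/2 + 1 by norm_num, Real.Gamma_add_one (by norm_num), g72]; ring

lemma g112 : Real.Gamma (11/2) = (945/32) * Real.Gamma (1/2) := by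
  rw [show (11/2:ℝ) = 9/2 + 1 by norm_num, Real.Gamma_add_one (by norm_num), g92]; ring

lemma g2 : Real.Gamma 2 = 1 := by
  rw [show (2:ℝ) = 1 + 1 by norm_num, Real.Gamma_add_one (by norm_num), Real.Gamma_one]; ring

lemma g3 : Real.Gamma 3 = 2 := by
  rw [show (3:ℝ) = 2 + 1 by norm_num, Real.Gamma_add_one (by norm_num), g2]; ring

lemma g4 : Real.Gamma 4 = 6 := by
  rw [show (4:ℝ) = 3 + 1 by norm_num, Real.Gamma_add_one (by norm_num), g3]; ring

lemma g5 : Real.Gamma 5 = 24 := by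
  rw [show (5:ℝ) = 4 + 1 by norm_num, Real.Gamma_add_one (by norm_num), g4]; ring

lemma ghalf_pos : 0 < Real.Gamma (1/2) := Real.Gamma_pos_of_pos (by norm_num)

set_option maxHeartbeats 1000000 in
lemma partA (β : ℝ) (hβ : 0 ≤ β) :
    (Real.Gamma (β+3) * Real.Gamma (3/2) / Real.Gamma (β+9/2))^2
      ≤ (16/105) * (Real.Gamma (2*β+3) * Real.Gamma (3/2) / Real.Gamma (2*β+9/2)) := by
  set f : ℝ → ℝ := fun t => t ^ (β+1) * (1-t) ^ ((1:ℝ)/4) with hf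
  set g : ℝ → ℝ := fun t => t * (1-t) ^ ((1:ℝ)/4) with hg
  -- pointwise identities on Ioc 0 1
  have hEgg : EqOn (fun t : ℝ => t ^ (2:ℝ) * (1-t) ^ ((1:ℝ)/2)) (fun t => g t * g t) (Ioc (0:ℝ) 1) := by
    intro t ht
    have h1t : (0:ℝ) ≤ 1 - t := by linarith [ht.2]
    have e2 : (1-t) ^ ((1:ℝ)/2) = (1-t) ^ ((1:ℝ)/4) * (1-t) ^ ((1:ℝ)/4) := by
      rw [← Real.rpow_add' h1t (by norm_num)]; norm_num
    have e3 : t ^ (2:ℝ) = t * t := by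
      rw [show (2:ℝ) = ((2:ℕ):ℝ) by norm_num, Real.rpow_natCast]; ring
    simp only [hg, e2, e3]; ring
  have hEfg : EqOn (fun t : ℝ => t ^ (β+2) * (1-t) ^ ((1:ℝ)/2)) (fun t => f t * g t) (Ioc (0:ℝ) 1) := by
    intro t ht
    have h1t : (0:ℝ) ≤ 1 - t := by linarith [ht.2]
    have e2 : (1-t) ^ ((1:ℝ)/2) = (1-t) ^ ((1:ℝ)/4) * (1-t) ^ ((1:ℝ)/4) := by
      rw [← Real.rpow_add' h1t (by norm_num)]; norm_num
    have e3 : t ^ (β+2) = t ^ (β+1) * t := by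
      rw [show β+2 = (β+1)+1 by ring, Real.rpow_add_one (ne_of_gt ht.1)]
    simp only [hf, hg, e2, e3]; ring
  have hEff : EqOn (fun t : ℝ => t ^ (2*β+2) * (1-t) ^ ((1:ℝ)/2)) (fun t => f t * f t) (Ioc (0:ℝ) 1) := by
    intro t ht
    have h1t : (0:ℝ) ≤ 1 - t := by linarith [ht.2]
    have e2 : (1-t) ^ ((1:ℝ)/2) = (1-t) ^ ((1:ℝ)/4) * (1-t) ^ ((1:ℝ)/4) := by
      rw [← Real.rpow_add' h1t (by norm_num)]; norm_num
    have e3 : t ^ (2*β+2) = t ^ (β+1) * t ^ (β+1) := by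
      rw [← Real.rpow_add ht.1]; ring_nf
    simp only [hf, e2, e3]; ring
  have hgg : IntegrableOn (fun t => g t * g t) (Ioc (0:ℝ) 1) :=
    (myBetaInt 2 (1/2) (by norm_num) (by norm_num)).congr_fun hEgg measurableSet_Ioc
  have hfg : IntegrableOn (fun t => f t * g t) (Ioc (0:ℝ) 1) :=
    (myBetaInt (β+2) (1/2) (by linarith) (by norm_num)).congr_fun hEfg measurableSet_Ioc
  have hff : IntegrableOn (fun t => f t * f t) (Ioc (0:ℝ) 1) :=
    (myBetaInt (2*β+2) (1/2) (by linarith) (by norm_num)).congr_fun hEff measurableSet_Ioc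
  have hquad : ∀ x : ℝ, 0 ≤ (∫ t in Ioc (0:ℝ) 1, g t * g t) * (x*x)
      + (2 * ∫ t in Ioc (0:ℝ) 1, f t * g t) * x + (∫ t in Ioc (0:ℝ) 1, f t * f t) := by
    intro x
    have h0 : 0 ≤ ∫ t in Ioc (0:ℝ) 1, ((x*x) * (g t * g t) + ((2*x) * (f t * g t) + f t * f t)) := by
      refine setIntegral_nonneg measurableSet_Ioc (fun t _ => ?_)
      nlinarith [sq_nonneg (x * g t + f t)]
    have A2 := integral_add (μ := volume.restrict (Ioc (0:ℝ) 1)) (hgg.const_mul (x*x))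
      ((hfg.const_mul (2*x)).add hff)
    have A1 := integral_add (μ := volume.restrict (Ioc (0:ℝ) 1)) (hfg.const_mul (2*x)) hff
    simp only [Pi.add_apply] at A1 A2
    rw [A2, A1, integral_const_mul, integral_const_mul] at h0
    linarith
  have hdis := discrim_le_zero hquad
  rw [discrim] at hdis
  have hCS : (∫ t in Ioc (0:ℝ) 1, f t * g t)^2
      ≤ (∫ t in Ioc (0:ℝ) 1, g t * g t) * (∫ t in Ioc (0:ℝ) 1, f t * f t) := by nlinarith
  have vgg : (∫ t in Ioc (0:ℝ) 1, g t * g t) = 16/105 := by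
    rw [← setIntegral_congr_fun measurableSet_Ioc hEgg, myBeta 2 (1/2) (by norm_num) (by norm_num)]
    rw [show (2:ℝ)+1 = 3 by norm_num, show (1:ℝ)/2+1 = 3/2 by norm_num,
      show (2:ℝ)+1/2+2 = 9/2 by norm_num, g3, g32, g92]
    field_simp
  have vfg : (∫ t in Ioc (0:ℝ) 1, f t * g t)
      = Real.Gamma (β+3) * Real.Gamma (3/2) / Real.Gamma (β+9/2) := by
    rw [← setIntegral_congr_fun measurableSet_Ioc hEfg, myBeta (β+2) (1/2) (by linarith) (by norm_num)]
    rw [show β+2+1 = β+3 by ring, show (1:ℝ)/2+1 = 3/2 by norm_num,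
      show β+2+1/2+2 = β+9/2 by ring]
  have vff : (∫ t in Ioc (0:ℝ) 1, f t * f t)
      = Real.Gamma (2*β+3) * Real.Gamma (3/2) / Real.Gamma (2*β+9/2) := by
    rw [← setIntegral_congr_fun measurableSet_Ioc hEff, myBeta (2*β+2) (1/2) (by linarith) (by norm_num)]
    rw [show 2*β+2+1 = 2*β+3 by ring, show (1:ℝ)/2+1 = 3/2 by norm_num,
      show 2*β+2+1/2+2 = 2*β+9/2 by ring]
  rw [vgg, vfg, vff] at hCS
  linarith

set_option maxHeartbeats 1000000 in
lemma partB (β : ℝ) (hβ0 : 0 ≤ β) (hβ1 : β ≤ 1) :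
    32/105 ≤ (β+2) * (Real.Gamma (β+3) * Real.Gamma (3/2) / Real.Gamma (β+9/2)) := by
  have hconc := Real.concaveOn_rpow hβ0 hβ1
  set c : ℝ := (2/3:ℝ) ^ β with hc
  set W : ℝ → ℝ := fun t =>
    ((t ^ β - (3*(1-t)*c + (3*t-2))) * (3*t-2)) * (t * t * (1-t) ^ (-(1/2):ℝ) / 2) with hW
  -- pointwise nonnegativity
  have hpt : ∀ t ∈ Ioc (0:ℝ) 1, 0 ≤ W t := by
    intro t ht
    have ht0 : 0 < t := ht.1
    have ht1 : t ≤ 1 := ht.2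
    have h1t : (0:ℝ) ≤ 1 - t := by linarith
    have hfac2 : 0 ≤ t * t * (1-t) ^ (-(1/2):ℝ) / 2 := by positivity
    refine mul_nonneg ?_ hfac2
    rcases le_or_gt t (2/3) with hcase | hcase
    · -- t ≤ 2/3 : t^β ≤ G t and 3t-2 ≤ 0
      have h1t' : (0:ℝ) < 1 - t := by linarith
      have h3 : (0:ℝ) < 3*(1-t) := by linarith
      have ha : (0:ℝ) ≤ 1/(3*(1-t)) := by positivity
      have hb : (0:ℝ) ≤ (2-3*t)/(3*(1-t)) := div_nonneg (by linarith) (by linarith)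
      have hab : 1/(3*(1-t)) + (2-3*t)/(3*(1-t)) = 1 := by field_simp; ring
      have hcomb := hconc.2 (mem_Ici.2 ht0.le) (mem_Ici.2 zero_le_one) ha hb hab
      simp only [smul_eq_mul, Real.one_rpow, mul_one] at hcomb
      have harg : 1/(3*(1-t)) * t + (2-3*t)/(3*(1-t)) = 2/3 := by
        field_simp
        ring
      rw [harg] at hcomb
      have h6 := mul_le_mul_of_nonneg_left hcomb h3.le
      have e7 : 3*(1-t) * (1/(3*(1-t)) * t^β + (2-3*t)/(3*(1-t))) = t^β + (2-3*t) := by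
        field_simp
      rw [e7] at h6
      have hg1 : t ^ β - (3*(1-t)*c + (3*t-2)) ≤ 0 := by rw [hc]; linarith
      have hg2 : 3*t - 2 ≤ 0 := by linarith
      nlinarith [hg1, hg2]
    · -- t > 2/3 : G t ≤ t^β and 3t-2 ≥ 0
      have hcomb := hconc.2 (mem_Ici.2 (by norm_num : (0:ℝ) ≤ 2/3)) (mem_Ici.2 zero_le_one)
        (by linarith : (0:ℝ) ≤ 3*(1-t)) (by linarith : (0:ℝ) ≤ 3*t-2)
        (by ring : 3*(1-t) + (3*t-2) = 1)
      simp only [smul_eq_mul, Real.one_rpow, mul_one] at hcomb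
      have harg : 3*(1-t) * (2/3) + (3*t-2) = t := by ring
      rw [harg] at hcomb
      have hg1 : 0 ≤ t ^ β - (3*(1-t)*c + (3*t-2)) := by rw [hc]; linarith
      exact mul_nonneg hg1 (by linarith)
  have h0 : 0 ≤ ∫ t in Ioc (0:ℝ) 1, W t := setIntegral_nonneg measurableSet_Ioc hpt
  -- rewrite W as linear combination of beta integrands
  set r : ℝ → ℝ := fun t => (1-t) ^ (-(1/2):ℝ) with hr
  have hEq : EqOn W (fun t =>
      (3/2) * (t ^ (β+3) * r t) + ((-1) * (t ^ (β+2) * r t)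
      + ((6 - 15*c/2) * (t ^ (3:ℝ) * r t) + ((3*c - 2) * (t ^ (2:ℝ) * r t)
      + (9*c/2 - 9/2) * (t ^ (4:ℝ) * r t))))) (Ioc (0:ℝ) 1) := by
    intro t ht
    have ht0 : t ≠ 0 := ne_of_gt ht.1
    have e2 : t ^ (2:ℝ) = t * t := by
      rw [show (2:ℝ) = ((2:ℕ):ℝ) by norm_num, Real.rpow_natCast]; ring
    have e3 : t ^ (3:ℝ) = t * t * t := by
      rw [show (3:ℝ) = ((3:ℕ):ℝ) by norm_num, Real.rpow_natCast]; ring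
    have e4 : t ^ (4:ℝ) = t * t * t * t := by
      rw [show (4:ℝ) = ((4:ℕ):ℝ) by norm_num, Real.rpow_natCast]; ring
    have eb1 : t ^ (β+1) = t ^ β * t := Real.rpow_add_one ht0 β
    have eb2 : t ^ (β+2) = t ^ β * t * t := by
      rw [show β+2 = (β+1)+1 by ring, Real.rpow_add_one ht0, eb1]
    have eb3 : t ^ (β+3) = t ^ β * t * t * t := by
      rw [show β+3 = (β+2)+1 by ring, Real.rpow_add_one ht0, eb2]
    simp only [hW, hr, e2, e3, e4, eb2, eb3]
    ring
  rw [setIntegral_congr_fun measurableSet_Ioc hEq] at h0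
  -- integrability of the pieces
  have i1 : IntegrableOn (fun t : ℝ => t ^ (β+3) * r t) (Ioc (0:ℝ) 1) :=
    myBetaInt (β+3) (-(1/2)) (by linarith) (by norm_num)
  have i2 : IntegrableOn (fun t : ℝ => t ^ (β+2) * r t) (Ioc (0:ℝ) 1) :=
    myBetaInt (β+2) (-(1/2)) (by linarith) (by norm_num)
  have i3 : IntegrableOn (fun t : ℝ => t ^ (3:ℝ) * r t) (Ioc (0:ℝ) 1) :=
    myBetaInt 3 (-(1/2)) (by norm_num) (by norm_num)
  have i4 : IntegrableOn (fun t : ℝ => t ^ (2:ℝ) * r t) (Ioc (0:ℝ) 1) :=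
    myBetaInt 2 (-(1/2)) (by norm_num) (by norm_num)
  have i5 : IntegrableOn (fun t : ℝ => t ^ (4:ℝ) * r t) (Ioc (0:ℝ) 1) :=
    myBetaInt 4 (-(1/2)) (by norm_num) (by norm_num)
  have A4 := integral_add (μ := volume.restrict (Ioc (0:ℝ) 1)) (i4.const_mul (3*c-2))
    (i5.const_mul (9*c/2 - 9/2))
  have A3 := integral_add (μ := volume.restrict (Ioc (0:ℝ) 1)) (i3.const_mul (6 - 15*c/2))
    ((i4.const_mul (3*c-2)).add (i5.const_mul (9*c/2 - 9/2)))
  have A2 := integral_add (μ := volume.restrict (Ioc (0:ℝ) 1)) (i2.const_mul (-1))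
    ((i3.const_mul (6 - 15*c/2)).add ((i4.const_mul (3*c-2)).add (i5.const_mul (9*c/2 - 9/2))))
  have A1 := integral_add (μ := volume.restrict (Ioc (0:ℝ) 1)) (i1.const_mul (3/2))
    ((i2.const_mul (-1)).add (((i3.const_mul (6 - 15*c/2)).add
      ((i4.const_mul (3*c-2)).add (i5.const_mul (9*c/2 - 9/2))))))
  simp only [Pi.add_apply] at A1 A2 A3 A4
  rw [A1, A2, A3, A4, integral_const_mul, integral_const_mul, integral_const_mul,
    integral_const_mul, integral_const_mul] at h0
  -- evaluate the five integrals
  have v1 : ∫ t in Ioc (0:ℝ) 1, t ^ (β+3) * r t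
      = Real.Gamma (β+4) * Real.Gamma (1/2) / Real.Gamma (β+9/2) := by
    rw [hr, myBeta (β+3) (-(1/2)) (by linarith) (by norm_num),
      show β+3+1 = β+4 by ring, show -(1/2:ℝ)+1 = 1/2 by norm_num,
      show β+3+(-(1/2))+2 = β+9/2 by ring]
  have v2 : ∫ t in Ioc (0:ℝ) 1, t ^ (β+2) * r t
      = Real.Gamma (β+3) * Real.Gamma (1/2) / Real.Gamma (β+7/2) := by
    rw [hr, myBeta (β+2) (-(1/2)) (by linarith) (by norm_num),
      show β+2+1 = β+3 by ring, show -(1/2:ℝ)+1 = 1/2 by norm_num,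
      show β+2+(-(1/2))+2 = β+7/2 by ring]
  have v3 : ∫ t in Ioc (0:ℝ) 1, t ^ (3:ℝ) * r t = 32/35 := by
    rw [hr, myBeta 3 (-(1/2)) (by norm_num) (by norm_num),
      show (3:ℝ)+1 = 4 by norm_num, show -(1/2:ℝ)+1 = 1/2 by norm_num,
      show (3:ℝ)+(-(1/2))+2 = 9/2 by norm_num, g4, g92]
    field_simp
    ring
  have v4 : ∫ t in Ioc (0:ℝ) 1, t ^ (2:ℝ) * r t = 16/15 := by
    rw [hr, myBeta 2 (-(1/2)) (by norm_num) (by norm_num),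
      show (2:ℝ)+1 = 3 by norm_num, show -(1/2:ℝ)+1 = 1/2 by norm_num,
      show (2:ℝ)+(-(1/2))+2 = 7/2 by norm_num, g3, g72]
    field_simp
    ring
  have v5 : ∫ t in Ioc (0:ℝ) 1, t ^ (4:ℝ) * r t = 256/315 := by
    rw [hr, myBeta 4 (-(1/2)) (by norm_num) (by norm_num),
      show (4:ℝ)+1 = 5 by norm_num, show -(1/2:ℝ)+1 = 1/2 by norm_num,
      show (4:ℝ)+(-(1/2))+2 = 11/2 by norm_num, g5, g112]
    field_simp
    ring
  rw [v1, v2, v3, v4, v5] at h0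
  -- Gamma algebra
  have hgb4 : Real.Gamma (β+4) = (β+3) * Real.Gamma (β+3) := by
    rw [show β+4 = (β+3)+1 by ring, Real.Gamma_add_one (by linarith)]
  have hgb92 : Real.Gamma (β+9/2) = (β+7/2) * Real.Gamma (β+7/2) := by
    rw [show β+9/2 = (β+7/2)+1 by ring, Real.Gamma_add_one (by linarith)]
  have hp3 : 0 < Real.Gamma (β+3) := Real.Gamma_pos_of_pos (by linarith)
  have hp72 : 0 < Real.Gamma (β+7/2) := Real.Gamma_pos_of_pos (by linarith)
  have hp92 : 0 < Real.Gamma (β+9/2) := Real.Gamma_pos_of_pos (by linarith)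
  rw [hgb4, hgb92] at h0
  rw [g32, hgb92]
  have h72 : (0:ℝ) < β + 7/2 := by linarith
  have hstep : 32/105 * ((β+7/2) * Real.Gamma (β+7/2)) ≤ (β+2) * Real.Gamma (β+3) * Real.Gamma (1/2) / 2 := by
    have hmul := mul_le_mul_of_nonneg_left h0 (le_of_lt (mul_pos h72 hp72))
    have expand : ((β+7/2) * Real.Gamma (β+7/2)) * (3/2 * ((β+3) * Real.Gamma (β+3) * Real.Gamma (1/2) / ((β+7/2) * Real.Gamma (β+7/2))) + (-1 * (Real.Gamma (β+3) * Real.Gamma (1/2) / Real.Gamma (β+7/2)) + ((6 - 15*c/2) * (32/35) + ((3*c-2) * (16/15) + (9*c/2 - 9/2) * (256/315)))))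
        = (β+2) * Real.Gamma (β+3) * Real.Gamma (1/2) / 2 - 32/105 * ((β+7/2) * Real.Gamma (β+7/2)) := by
      field_simp
      ring
    rw [mul_zero, expand] at hmul
    linarith
  have hpos : (0:ℝ) < (β+7/2) * Real.Gamma (β+7/2) := mul_pos h72 hp72
  rw [show (β + 2) * (Real.Gamma (β+3) * (1/2 * Real.Gamma (1/2)) / ((β+7/2) * Real.Gamma (β+7/2)))
      = ((β+2) * Real.Gamma (β+3) * Real.Gamma (1/2) / 2) / ((β+7/2) * Real.Gamma (β+7/2)) by ring,
    le_div_iff₀ hpos]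
  exact hstep


theorem stmt8 (α : ℝ) (hα : α ∈ Set.Icc (0:ℝ) 2) :
    (90 + 19 * α) * Real.Gamma (α / 2 + 2) * Real.Gamma (α + 9 / 2) /
        (Real.Gamma (α / 2 + 11 / 2) * Real.Gamma (α + 2)) ≤
      (90 + 19 * α) * (α + 2) / (α + 9) := by
  obtain ⟨hα0, hα2⟩ := hα
  have hβ0 : 0 ≤ α/2 := by linarith
  have hβ1 : α/2 ≤ 1 := by linarith
  have hA := partA (α/2) hβ0
  have hB := partB (α/2) hβ0 hβ1
  rw [show 2*(α/2) + 3 = α + 3 by ring, show 2*(α/2) + 9/2 = α + 9/2 by ring] at hA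
  set Ih : ℝ := Real.Gamma (α/2+3) * Real.Gamma (3/2) / Real.Gamma (α/2+9/2) with hIh
  set Ia : ℝ := Real.Gamma (α+3) * Real.Gamma (3/2) / Real.Gamma (α+9/2) with hIa
  have hIhpos : 0 < Ih := by
    rw [hIh]
    have := Real.Gamma_pos_of_pos (show (0:ℝ) < α/2+3 by linarith)
    have := Real.Gamma_pos_of_pos (show (0:ℝ) < α/2+9/2 by linarith)
    have := Real.Gamma_pos_of_pos (show (0:ℝ) < (3/2:ℝ) by norm_num)
    positivity
  have hIapos : 0 < Ia := by
    rw [hIa]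
    have := Real.Gamma_pos_of_pos (show (0:ℝ) < α+3 by linarith)
    have := Real.Gamma_pos_of_pos (show (0:ℝ) < α+9/2 by linarith)
    have := Real.Gamma_pos_of_pos (show (0:ℝ) < (3/2:ℝ) by norm_num)
    positivity
  -- combine: 2 * Ih ≤ (α/2+2) * Ia
  have hcomb : 2 * Ih ≤ (α/2+2) * Ia := by
    have s1 : (α/2+2) * (Ih^2) ≤ (α/2+2) * ((16/105) * Ia) :=
      mul_le_mul_of_nonneg_left hA (by linarith)
    have s2 : (32/105) * Ih ≤ ((α/2+2) * Ih) * Ih :=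
      mul_le_mul_of_nonneg_right hB (le_of_lt hIhpos)
    nlinarith [s1, s2, hIhpos, hIapos]
  -- unfold to the key Gamma inequality
  have hg1 : Real.Gamma (α/2+3) = (α/2+2) * Real.Gamma (α/2+2) := by
    rw [show α/2+3 = (α/2+2)+1 by ring, Real.Gamma_add_one (by linarith)]
  have hp22 : 0 < Real.Gamma (α/2+2) := Real.Gamma_pos_of_pos (by linarith)
  have hp92h : 0 < Real.Gamma (α/2+9/2) := Real.Gamma_pos_of_pos (by linarith)
  have hp92a : 0 < Real.Gamma (α+9/2) := Real.Gamma_pos_of_pos (by linarith)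
  have hp3a : 0 < Real.Gamma (α+3) := Real.Gamma_pos_of_pos (by linarith)
  have hp2a : 0 < Real.Gamma (α+2) := Real.Gamma_pos_of_pos (by linarith)
  have hg32pos : 0 < Real.Gamma (3/2) := Real.Gamma_pos_of_pos (by norm_num)
  have key : 2 * Real.Gamma (α/2+2) * Real.Gamma (α+9/2)
      ≤ Real.Gamma (α/2+9/2) * Real.Gamma (α+3) := by
    rw [hIh, hIa, hg1] at hcomb
    have h22 : (0:ℝ) < α/2+2 := by linarith
    rw [show 2*((α/2+2) * Real.Gamma (α/2+2) * Real.Gamma (3/2) / Real.Gamma (α/2+9/2))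
        = (2*(α/2+2) * Real.Gamma (α/2+2) * Real.Gamma (3/2)) / Real.Gamma (α/2+9/2) by ring,
      show (α/2+2) * (Real.Gamma (α+3) * Real.Gamma (3/2) / Real.Gamma (α+9/2))
        = ((α/2+2) * Real.Gamma (α+3) * Real.Gamma (3/2)) / Real.Gamma (α+9/2) by ring,
      div_le_div_iff₀ hp92h hp92a] at hcomb
    rw [show 2*(α/2+2) * Real.Gamma (α/2+2) * Real.Gamma (3/2) * Real.Gamma (α+9/2)
        = ((α/2+2) * Real.Gamma (3/2)) * (2 * Real.Gamma (α/2+2) * Real.Gamma (α+9/2)) by ring,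
      show (α/2+2) * Real.Gamma (α+3) * Real.Gamma (3/2) * Real.Gamma (α/2+9/2)
        = ((α/2+2) * Real.Gamma (3/2)) * (Real.Gamma (α/2+9/2) * Real.Gamma (α+3)) by ring] at hcomb
    exact le_of_mul_le_mul_left hcomb (by positivity)
  -- final algebra
  have hg2 : Real.Gamma (α/2+11/2) = (α/2+9/2) * Real.Gamma (α/2+9/2) := by
    rw [show α/2+11/2 = (α/2+9/2)+1 by ring, Real.Gamma_add_one (by linarith)]
  have hg3 : Real.Gamma (α+3) = (α+2) * Real.Gamma (α+2) := by
    rw [show α+3 = (α+2)+1 by ring, Real.Gamma_add_one (by linarith)]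
  rw [hg2]
  have hd1 : (0:ℝ) < (α/2+9/2) * Real.Gamma (α/2+9/2) * Real.Gamma (α+2) := by positivity
  have hd2 : (0:ℝ) < α + 9 := by linarith
  rw [div_le_div_iff₀ hd1 hd2]
  rw [hg3] at key
  have hfac : (0:ℝ) ≤ (90 + 19*α) * (α/2+9/2) := by nlinarith
  have hm := mul_le_mul_of_nonneg_left key hfac
  nlinarith [hm]
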